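/- Let D ⊆ ℂ be an open disc with centre c, and (c_n) a sequence in D converging to c. If (a_n) and (b_n) are sequences of complex numbers such that both series ∑_{n≥0} a_n(z−c₁)⋯(z−c_n) and ∑_{n≥0} b_n(z−c₁)⋯(z−c_n) converge for all z ∈ D and have the same sum for all z ∈ D, then a_n = b_n for all n. -/

import Mathlib

open Finset Metric Filter Topology


lemma newton_sum_shift (a : ℕ → ℂ) (cs : ℕ → ℂ) (z : ℂ) (k : ℕ) :
    ∑ n ∈ Finset.range (k+1), a n * ∏ i ∈ Finset.range n, (z - cs i)
      = a 0 + (z - cs 0) * ∑ n ∈ Finset.range k, a (n+1) * ∏ i ∈ Finset.range n, (z - cs (i+1)) := by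
  rw [Finset.sum_range_succ']
  simp only [Finset.prod_range_succ', Finset.prod_range_zero, one_mul, Finset.mul_sum]
  rw [add_comm]
  congr 1
  · simp
  · exact Finset.sum_congr rfl fun n _ => by ring

lemma newton_terms_tendsto (f : ℕ → ℂ) (L : ℂ)
    (h : Tendsto (fun k => ∑ n ∈ Finset.range k, f n) atTop (𝓝 L)) :
    Tendsto f atTop (𝓝 0) := by
  have h1 : Tendsto (fun k => ∑ n ∈ Finset.range (k+1), f n) atTop (𝓝 L) :=
    h.comp (tendsto_add_atTop_nat 1)
  have h2 := h1.sub h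
  simpa [Finset.sum_range_succ] using h2

lemma newton_bound_of_tendsto (f : ℕ → ℂ) (x : ℂ) (h : Tendsto f atTop (𝓝 x)) :
    ∃ M : ℝ, ∀ n, ‖f n‖ ≤ M := by
  have := (h.norm).bddAbove_range
  obtain ⟨M, hM⟩ := this
  exact ⟨M, fun n => hM (Set.mem_range_self n)⟩


lemma newton_majorant (c z₀ : ℂ) (r t : ℝ) (a cs : ℕ → ℂ) (M : ℝ)
    (hcs : ∀ n, cs n ∈ ball c r)
    (hlim : Tendsto cs atTop (𝓝 c))
    (ht : 0 ≤ t) (hts : t < dist z₀ c) (hsr : dist z₀ c < r)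
    (hz₀ : ∀ n, z₀ ≠ cs n)
    (hM : ∀ n, ‖a n * ∏ i ∈ Finset.range n, (z₀ - cs i)‖ ≤ M) :
    ∃ u : ℕ → ℝ, Summable u ∧
      ∀ (n : ℕ), ∀ z ∈ closedBall c t, ‖a n * ∏ i ∈ Finset.range n, (z - cs i)‖ ≤ u n := by
  set s : ℝ := dist z₀ c with hs
  have hs0 : 0 < s := lt_of_le_of_lt ht hts
  set ε : ℝ := (s - t)/4 with hε
  have hε0 : 0 < ε := by rw [hε]; linarith
  set θ : ℝ := (3*t + s)/(3*s + t) with hθ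
  have hden : 0 < 3*s + t := by linarith
  have hθ0 : 0 < θ := div_pos (by linarith) hden
  have hθ1 : θ < 1 := by
    rw [hθ, div_lt_one hden]; linarith
  -- N such that nodes are ε-close to c
  obtain ⟨N, hN⟩ : ∃ N, ∀ n ≥ N, dist (cs n) c < ε := by
    have := (Metric.tendsto_atTop.mp hlim) ε hε0
    exact this
  set Y : ℕ → ℝ := fun i => ‖z₀ - cs i‖ with hY
  have hYpos : ∀ i, 0 < Y i := fun i => by
    simpa [hY] using norm_pos_iff.mpr (sub_ne_zero_of_ne (hz₀ i))
  set P : ℝ := ∏ i ∈ Finset.range N, Y i with hP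
  have hPpos : 0 < P := Finset.prod_pos fun i _ => hYpos i
  set R : ℝ := t + r with hR
  have hRpos : 0 < R := by have := hs0.trans hsr; linarith
  have hM0 : 0 ≤ M := le_trans (norm_nonneg _) (hM 0)
  set K : ℝ := M * R^N / P with hK
  have hK0 : 0 ≤ K := div_nonneg (mul_nonneg hM0 (pow_nonneg hRpos.le N)) hPpos.le
  refine ⟨fun n => K/θ^N * θ^n + (if n < N then ‖a n‖ * R^n else 0), ?_, ?_⟩
  · apply Summable.add
    · exact (summable_geometric_of_lt_one hθ0.le hθ1).mul_left _
    · exact summable_of_ne_finset_zero (s := Finset.range N)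
        (fun n hn => by simp [Finset.mem_range] at hn; simp [hn])
  · intro n z hz
    beta_reduce
    have hzc : dist z c ≤ t := mem_closedBall.mp hz
    have hXle : ∀ i, ‖z - cs i‖ ≤ R := by
      intro i
      have h1 : dist z (cs i) ≤ dist z c + dist c (cs i) := dist_triangle _ _ _
      have h2 : dist c (cs i) < r := by
        have := mem_ball.mp (hcs i); rwa [dist_comm]
      calc ‖z - cs i‖ = dist z (cs i) := (dist_eq_norm _ _).symm
        _ ≤ dist z c + dist c (cs i) := h1
        _ ≤ t + r := by linarith
    have hX0 : ∀ i, 0 ≤ ‖z - cs i‖ := fun i => norm_nonneg _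
    rw [norm_mul, norm_prod]
    by_cases hn : n < N
    · refine le_trans ?_ (le_add_of_nonneg_left (mul_nonneg (div_nonneg hK0 (pow_nonneg hθ0.le N)) (pow_nonneg hθ0.le n)))
      rw [if_pos hn]
      apply mul_le_mul_of_nonneg_left _ (norm_nonneg _)
      calc ∏ i ∈ Finset.range n, ‖z - cs i‖ ≤ ∏ i ∈ Finset.range n, R :=
            Finset.prod_le_prod (fun i _ => hX0 i) (fun i _ => hXle i)
        _ = R^n := by rw [Finset.prod_const, Finset.card_range]
    · push_neg at hn
      rw [if_neg (by omega)]
      refine le_trans ?_ (le_add_of_nonneg_right le_rfl)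
      -- per-factor estimate for i ≥ N
      have hfac : ∀ i ∈ Finset.Ico N n, ‖z - cs i‖ ≤ θ * Y i := by
        intro i hi
        have hiN : N ≤ i := (Finset.mem_Ico.mp hi).1
        have hcsi : dist (cs i) c < ε := hN i hiN
        have h1 : ‖z - cs i‖ ≤ t + ε := by
          calc ‖z - cs i‖ = dist z (cs i) := (dist_eq_norm _ _).symm
            _ ≤ dist z c + dist (cs i) c := by rw [dist_comm (cs i) c]; exact dist_triangle _ _ _
            _ ≤ t + ε := by linarith
        have h2 : s - ε ≤ Y i := by
          have : dist z₀ c ≤ dist z₀ (cs i) + dist (cs i) c := dist_triangle _ _ _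
          have h3 : dist z₀ (cs i) = Y i := dist_eq_norm _ _
          linarith
        have h4 : θ * (s - ε) ≤ θ * Y i := mul_le_mul_of_nonneg_left h2 hθ0.le
        have h5 : θ * (s - ε) = t + ε := by
          rw [hθ, hε]; field_simp; ring
        linarith
      -- split the product
      have hsplit : ∏ i ∈ Finset.range n, ‖z - cs i‖
          = (∏ i ∈ Finset.range N, ‖z - cs i‖) * ∏ i ∈ Finset.Ico N n, ‖z - cs i‖ :=
        (Finset.prod_range_mul_prod_Ico _ hn).symm
      have hb1 : ∏ i ∈ Finset.range N, ‖z - cs i‖ ≤ R^N := by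
        calc ∏ i ∈ Finset.range N, ‖z - cs i‖ ≤ ∏ i ∈ Finset.range N, R :=
              Finset.prod_le_prod (fun i _ => hX0 i) (fun i _ => hXle i)
          _ = R^N := by rw [Finset.prod_const, Finset.card_range]
      have hb2 : ∏ i ∈ Finset.Ico N n, ‖z - cs i‖ ≤ θ^(n-N) * ∏ i ∈ Finset.Ico N n, Y i := by
        calc ∏ i ∈ Finset.Ico N n, ‖z - cs i‖ ≤ ∏ i ∈ Finset.Ico N n, (θ * Y i) :=
              Finset.prod_le_prod (fun i _ => hX0 i) hfac
          _ = θ^(n-N) * ∏ i ∈ Finset.Ico N n, Y i := by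
              rw [Finset.prod_mul_distrib, Finset.prod_const, Nat.card_Ico]
      have hprod : ∏ i ∈ Finset.range n, ‖z - cs i‖
          ≤ R^N * (θ^(n-N) * ∏ i ∈ Finset.Ico N n, Y i) := by
        rw [hsplit]
        have hIco0 : 0 ≤ ∏ i ∈ Finset.Ico N n, ‖z - cs i‖ :=
          Finset.prod_nonneg (fun i _ => hX0 i)
        exact mul_le_mul hb1 hb2 hIco0 (pow_nonneg hRpos.le N)
      -- coefficient bound
      have hMn : ‖a n‖ * (P * ∏ i ∈ Finset.Ico N n, Y i) ≤ M := by
        have := hM n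
        rw [norm_mul, norm_prod] at this
        have hYsplit : ∏ i ∈ Finset.range n, Y i
            = P * ∏ i ∈ Finset.Ico N n, Y i := (Finset.prod_range_mul_prod_Ico _ hn).symm
        rw [← hYsplit]
        exact this
      have hIcoYpos : 0 < ∏ i ∈ Finset.Ico N n, Y i := Finset.prod_pos fun i _ => hYpos i
      have haY : ‖a n‖ * ∏ i ∈ Finset.Ico N n, Y i ≤ M / P := by
        rw [le_div_iff₀ hPpos]
        calc ‖a n‖ * (∏ i ∈ Finset.Ico N n, Y i) * P
            = ‖a n‖ * (P * ∏ i ∈ Finset.Ico N n, Y i) := by ring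
          _ ≤ M := hMn
      have hfinal : ‖a n‖ * ∏ i ∈ Finset.range n, ‖z - cs i‖ ≤ K * θ^(n-N) := by
        calc ‖a n‖ * ∏ i ∈ Finset.range n, ‖z - cs i‖
            ≤ ‖a n‖ * (R^N * (θ^(n-N) * ∏ i ∈ Finset.Ico N n, Y i)) :=
              mul_le_mul_of_nonneg_left hprod (norm_nonneg _)
          _ = (R^N * θ^(n-N)) * (‖a n‖ * ∏ i ∈ Finset.Ico N n, Y i) := by ring
          _ ≤ (R^N * θ^(n-N)) * (M / P) := by
              exact mul_le_mul_of_nonneg_left haY (mul_nonneg (pow_nonneg hRpos.le N) (pow_nonneg hθ0.le _))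
          _ = K * θ^(n-N) := by rw [hK]; ring
      calc ‖a n‖ * ∏ i ∈ Finset.range n, ‖z - cs i‖ ≤ K * θ^(n-N) := hfinal
        _ = K/θ^N * θ^n := by
            rw [pow_sub₀ θ hθ0.ne' hn]; field_simp

lemma newton_step (c : ℂ) (r : ℝ) (cs : ℕ → ℂ) (hcs : ∀ n, cs n ∈ ball c r)
    (hlim : Tendsto cs atTop (𝓝 c)) (a : ℕ → ℂ)
    (hP : ∀ z ∈ ball c r,
      Tendsto (fun k => ∑ n ∈ Finset.range k, a n * ∏ i ∈ Finset.range n, (z - cs i))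
        atTop (𝓝 0)) :
    a 0 = 0 ∧ ∀ z ∈ ball c r,
      Tendsto (fun k => ∑ n ∈ Finset.range k, a (n+1) * ∏ i ∈ Finset.range n, (z - cs (i+1)))
        atTop (𝓝 0) := by
  -- a 0 = 0 : evaluate at z = cs 0
  have ha0 : a 0 = 0 := by
    have h1 := hP (cs 0) (hcs 0)
    have h2 : Tendsto (fun k => ∑ n ∈ Finset.range k, a n * ∏ i ∈ Finset.range n, (cs 0 - cs i))
        atTop (𝓝 (a 0)) := by
      apply Tendsto.congr' _ (tendsto_const_nhds (x := a 0))
      filter_upwards [eventually_ge_atTop 1] with k hk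
      have : ∀ n ∈ Finset.range k, n ≠ 0 → a n * ∏ i ∈ Finset.range n, (cs 0 - cs i) = 0 := by
        intro n _ hn
        have : (0:ℕ) ∈ Finset.range n := Finset.mem_range.mpr (Nat.pos_of_ne_zero hn)
        rw [Finset.prod_eq_zero this (by ring), mul_zero]
      rw [Finset.sum_eq_single 0 (fun n h h' => this n h h') (fun h => absurd (Finset.mem_range.mpr hk) h)]
      simp
    exact tendsto_nhds_unique h2 h1
  refine ⟨ha0, ?_⟩
  -- convergence of the shifted series at points ≠ cs 0
  have hT0 : ∀ z ∈ ball c r, z ≠ cs 0 →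
      Tendsto (fun k => ∑ n ∈ Finset.range k, a (n+1) * ∏ i ∈ Finset.range n, (z - cs (i+1)))
        atTop (𝓝 0) := by
    intro z hz hzw
    have hS1 : Tendsto (fun k => ∑ n ∈ Finset.range (k+1), a n * ∏ i ∈ Finset.range n, (z - cs i))
        atTop (𝓝 0) := (hP z hz).comp (tendsto_add_atTop_nat 1)
    have hmul : Tendsto (fun k => (z - cs 0) *
        ∑ n ∈ Finset.range k, a (n+1) * ∏ i ∈ Finset.range n, (z - cs (i+1))) atTop (𝓝 0) := by
      apply hS1.congr
      intro k
      rw [newton_sum_shift, ha0, zero_add]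
    have hne : z - cs 0 ≠ 0 := sub_ne_zero_of_ne hzw
    have h3 := hmul.const_mul ((z - cs 0)⁻¹)
    rw [mul_zero] at h3
    apply h3.congr
    intro k
    rw [← mul_assoc, inv_mul_cancel₀ hne, one_mul]
  intro z hz
  by_cases hzw : z = cs 0
  · -- the hard case: z = cs 0
    subst hzw
    set w := cs 0 with hw
    set t : ℝ := dist w c with htdef
    have htr : t < r := mem_ball.mp (hcs 0)
    have ht0 : 0 ≤ t := dist_nonneg
    set ρ : ℝ := (t + r)/2 with hρ
    set δ : ℝ := (r - t)/4 with hδ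
    have hδ0 : 0 < δ := by rw [hδ]; linarith
    have hρ0 : 0 ≤ ρ := by rw [hρ]; linarith
    set u : ℂ := c + (ρ:ℂ) with hu
    have hud : dist u c = ρ := by rw [hu]; simp [dist_eq_norm, abs_of_nonneg hρ0]
    obtain ⟨z₀, hz₀ball, hz₀cs⟩ : ∃ z₀ ∈ ball u δ, z₀ ∉ Set.range cs := by
      by_contra hcon
      push_neg at hcon
      have hsub : ball u δ ⊆ Set.range cs := hcon
      have h1 := MeasureTheory.measure_mono (μ := MeasureTheory.volume) hsub
      rw [(Set.countable_range cs).measure_zero] at h1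
      exact absurd (le_antisymm h1 zero_le) (measure_ball_pos MeasureTheory.volume u hδ0).ne'
    have hz₀ne : ∀ n, z₀ ≠ cs n := fun n hn => hz₀cs ⟨n, hn.symm⟩
    set s : ℝ := dist z₀ c with hsdef
    have hz₀u : dist z₀ u < δ := mem_ball.mp hz₀ball
    rw [hδ] at hz₀u
    have hst : t < s := by
      have h1 : dist u c ≤ dist u z₀ + dist z₀ c := dist_triangle _ _ _
      rw [hud, dist_comm u z₀, hρ] at h1
      rw [hsdef]
      linarith
    have hsr : s < r := by
      have h1 : dist z₀ c ≤ dist z₀ u + dist u c := dist_triangle _ _ _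
      rw [hud, hρ] at h1
      rw [hsdef]
      linarith
    set t' : ℝ := (t + s)/2 with ht'def
    have htt' : t < t' := by rw [ht'def]; linarith
    have ht's : t' < s := by rw [ht'def]; linarith
    have ht'r : t' < r := lt_trans ht's hsr
    have ht'0 : 0 ≤ t' := le_of_lt (lt_of_le_of_lt ht0 htt')
    have hz₀ballr : z₀ ∈ ball c r := mem_ball.mpr hsr
    -- bound for the shifted series at z₀
    have hterm : Tendsto (fun n => a n * ∏ i ∈ Finset.range n, (z₀ - cs i)) atTop (𝓝 0) :=
      newton_terms_tendsto _ 0 (hP z₀ hz₀ballr)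
    have hne0 : z₀ - cs 0 ≠ 0 := sub_ne_zero_of_ne (hz₀ne 0)
    have htail : Tendsto (fun n => a (n+1) * ∏ i ∈ Finset.range n, (z₀ - cs (i+1)))
        atTop (𝓝 0) := by
      have h1 : Tendsto (fun n => a (n+1) * ∏ i ∈ Finset.range (n+1), (z₀ - cs i))
          atTop (𝓝 0) := hterm.comp (tendsto_add_atTop_nat 1)
      have h2 := h1.const_mul ((z₀ - cs 0)⁻¹)
      rw [mul_zero] at h2
      apply h2.congr
      intro n
      rw [Finset.prod_range_succ']
      calc (z₀ - cs 0)⁻¹ * (a (n+1) * ((∏ i ∈ Finset.range n, (z₀ - cs (i+1))) * (z₀ - cs 0)))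
          = ((z₀ - cs 0)⁻¹ * (z₀ - cs 0)) * (a (n+1) * ∏ i ∈ Finset.range n, (z₀ - cs (i+1))) := by
            ring
        _ = a (n+1) * ∏ i ∈ Finset.range n, (z₀ - cs (i+1)) := by
            rw [inv_mul_cancel₀ hne0, one_mul]
    obtain ⟨M, hM⟩ := newton_bound_of_tendsto _ _ htail
    obtain ⟨uu, huu, hbound⟩ := newton_majorant c z₀ r t' (fun n => a (n+1))
      (fun i => cs (i+1)) M (fun n => hcs (n+1)) (hlim.comp (tendsto_add_atTop_nat 1))
      ht'0 ht's hsr (fun n => hz₀ne (n+1)) hM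
    have hunif : TendstoUniformlyOn
        (fun k x => ∑ n ∈ Finset.range k, a (n+1) * ∏ i ∈ Finset.range n, (x - cs (i+1)))
        (fun x => ∑' n, a (n+1) * ∏ i ∈ Finset.range n, (x - cs (i+1)))
        atTop (closedBall c t') :=
      tendstoUniformlyOn_tsum_nat huu hbound
    set g : ℂ → ℂ := fun x => ∑' n, a (n+1) * ∏ i ∈ Finset.range n, (x - cs (i+1)) with hg
    have hgpt : ∀ x ∈ closedBall c t',
        Tendsto (fun k => ∑ n ∈ Finset.range k, a (n+1) * ∏ i ∈ Finset.range n, (x - cs (i+1)))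
          atTop (𝓝 (g x)) := fun x hx => hunif.tendsto_at hx
    have hCB : closedBall c t' ⊆ ball c r := closedBall_subset_ball ht'r
    have hgzero : ∀ x ∈ closedBall c t', x ≠ w → g x = 0 := fun x hx hxw =>
      tendsto_nhds_unique (hgpt x hx) (hT0 x (hCB hx) hxw)
    have hcont : ∀ k, Continuous
        (fun x : ℂ => ∑ n ∈ Finset.range k, a (n+1) * ∏ i ∈ Finset.range n, (x - cs (i+1))) := by
      intro k
      apply continuous_finset_sum
      intro n _
      exact continuous_const.mul
        (continuous_finset_prod _ (fun i _ => continuous_id.sub continuous_const))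
    have hgcont : ContinuousOn g (closedBall c t') :=
      hunif.continuousOn (Filter.Eventually.of_forall fun k => (hcont k).continuousOn).frequently
    have hwb : w ∈ ball c t' := mem_ball.mpr htt'
    have hwcb : w ∈ closedBall c t' := ball_subset_closedBall hwb
    have hcbnhds : closedBall c t' ∈ 𝓝 w :=
      Filter.mem_of_superset (isOpen_ball.mem_nhds hwb) ball_subset_closedBall
    have hfilter : 𝓝[closedBall c t' \ {w}] w = 𝓝[≠] w := by
      rw [Set.diff_eq, nhdsWithin_inter, nhdsWithin_eq_nhds.mpr hcbnhds]
      exact inf_eq_right.mpr nhdsWithin_le_nhds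
    haveI hNB : (𝓝[closedBall c t' \ {w}] w).NeBot := by rw [hfilter]; infer_instance
    have h1 : Tendsto g (𝓝[closedBall c t' \ {w}] w) (𝓝 (g w)) :=
      (hgcont w hwcb).mono_left (nhdsWithin_mono w Set.diff_subset)
    have h2 : Tendsto g (𝓝[closedBall c t' \ {w}] w) (𝓝 0) := by
      apply Tendsto.congr' _ tendsto_const_nhds
      filter_upwards [self_mem_nhdsWithin] with x hx
      exact (hgzero x hx.1 hx.2).symm
    have hgw : g w = 0 := tendsto_nhds_unique h1 h2
    have := hgpt w hwcb
    rwa [hgw] at this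
  · exact hT0 z hz hzw

/-- Uniqueness of Newton series coefficients: if two series
`∑ a_n (z−c₁)⋯(z−c_n)` and `∑ b_n (z−c₁)⋯(z−c_n)` (nodes in the disc, `c_n → c`)
converge for every `z` in the disc and have the same sum there, then `a_n = b_n`. -/
theorem stmt13 (c : ℂ) (r : ℝ) (hr : 0 < r)
    (cs : ℕ → ℂ) (hcs : ∀ n, cs n ∈ ball c r) (hlim : Tendsto cs atTop (𝓝 c))
    (a b : ℕ → ℂ)
    (h : ∀ z ∈ ball c r, ∃ L : ℂ,
      Tendsto (fun k => ∑ n ∈ Finset.range k, a n * ∏ i ∈ Finset.range n, (z - cs i))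
        atTop (𝓝 L) ∧
      Tendsto (fun k => ∑ n ∈ Finset.range k, b n * ∏ i ∈ Finset.range n, (z - cs i))
        atTop (𝓝 L)) :
    a = b := by
  have hd : ∀ z ∈ ball c r,
      Tendsto (fun k => ∑ n ∈ Finset.range k, (a n - b n) * ∏ i ∈ Finset.range n, (z - cs i))
        atTop (𝓝 0) := by
    intro z hz
    obtain ⟨L, ha, hb⟩ := h z hz
    have := ha.sub hb
    rw [sub_self] at this
    apply this.congr
    intro k
    rw [← Finset.sum_sub_distrib]
    exact Finset.sum_congr rfl fun n _ => by ring
  have key : ∀ m, ∀ z ∈ ball c r,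
      Tendsto (fun k => ∑ n ∈ Finset.range k,
        (a (n+m) - b (n+m)) * ∏ i ∈ Finset.range n, (z - cs (i+m))) atTop (𝓝 0) := by
    intro m
    induction m with
    | zero => simpa using hd
    | succ m ih =>
      have hstep := (newton_step c r (fun i => cs (i+m)) (fun i => hcs (i+m))
        (hlim.comp (tendsto_add_atTop_nat m)) (fun n => a (n+m) - b (n+m)) ih).2
      intro z hz
      have h2 := hstep z hz
      have e : ∀ k : ℕ, k + (m+1) = k + 1 + m := fun k => by omega
      simp only [e]
      exact h2
  funext n
  have h1 := (newton_step c r (fun i => cs (i+n)) (fun i => hcs (i+n))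
    (hlim.comp (tendsto_add_atTop_nat n)) (fun k => a (k+n) - b (k+n)) (key n)).1
  simp only [Nat.zero_add] at h1
  exact sub_eq_zero.mp h1
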